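/- arXiv:2509.02787 — 2 statements merged into one kernel-verified Lean document; each statement's English description precedes it below -/
import Mathlib

section
/- Let 𝒜 be a bounded, irreducible family of subadditive, order-preserving, homogeneous maps on ℝⁿ_{≥0} with r̂(𝒜) = 1 (after scaling), and let ‖·‖ be a monotone norm on ℝⁿ. Then ‖x‖_* := sup_{f ∈ 𝒜*} ‖f(|x|)‖ defines a monotone norm on ℝⁿ which is extremal for 𝒜: ‖f(x)‖_* ≤ r̂(𝒜)‖x‖_* for all x ∈ ℝⁿ_{≥0} and f ∈ 𝒜. -/
open Filter Topology Set

noncomputable section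

/-- A wedge in a real normed space: a convex set closed under positive scalar multiplication. -/
def IsWedge {X : Type*} [NormedAddCommGroup X] [NormedSpace ℝ X] (W : Set X) : Prop :=
  Convex ℝ W ∧ ∀ c : ℝ, 0 < c → ∀ x ∈ W, c • x ∈ W

/-- A closed cone: closed, convex, closed under positive scalar multiplication, K ∩ (−K) = {0}. -/
def IsClosedCone {X : Type*} [NormedAddCommGroup X] [NormedSpace ℝ X] (K : Set X) : Prop :=
  IsClosed K ∧ Convex ℝ K ∧ (∀ c : ℝ, 0 < c → ∀ x ∈ K, c • x ∈ K) ∧ K ∩ (-K) = {0}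

/-- A polyhedral cone: intersection of finitely many closed halfspaces through the origin. -/
def IsPolyhedralCone {X : Type*} [NormedAddCommGroup X] [NormedSpace ℝ X] (K : Set X) : Prop :=
  ∃ (k : ℕ) (φ : Fin k → (X →ₗ[ℝ] ℝ)), K = {x | ∀ i, 0 ≤ φ i x}

/-- `f` maps `W` into itself and is positively homogeneous on `W`. -/
def HomogOn {X : Type*} [NormedAddCommGroup X] [NormedSpace ℝ X] (f : X → X) (W : Set X) : Prop :=
  Set.MapsTo f W W ∧ ∀ c : ℝ, 0 < c → ∀ x ∈ W, f (c • x) = c • f x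

/-- `f` is order-preserving with respect to the order induced by the cone `K`. -/
def OrderPresOn {X : Type*} [NormedAddCommGroup X] [NormedSpace ℝ X] (f : X → X) (K : Set X) : Prop :=
  ∀ x ∈ K, ∀ y ∈ K, y - x ∈ K → f y - f x ∈ K

/-- `f` is subadditive on `K`: f(x+y) ≤ f(x)+f(y) in the cone order. -/
def SubaddOn {X : Type*} [NormedAddCommGroup X] [NormedSpace ℝ X] (f : X → X) (K : Set X) : Prop :=
  ∀ x ∈ K, ∀ y ∈ K, (f x + f y) - f (x + y) ∈ K

/-- The norm of a homogeneous map on `W`: sup of ‖f x‖ over unit vectors of `W`. -/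
def opNormW {X : Type*} [NormedAddCommGroup X] (f : X → X) (W : Set X) : ℝ :=
  sSup ((fun x => ‖f x‖) '' {x ∈ W | ‖x‖ = 1})

/-- A bounded homogeneous map on `W`. -/
def BoundedMapOn {X : Type*} [NormedAddCommGroup X] (f : X → X) (W : Set X) : Prop :=
  ∃ C : ℝ, ∀ x ∈ W, ‖f x‖ ≤ C * ‖x‖

/-- A bounded family of homogeneous maps on `W`. -/
def BoundedFamOn {X : Type*} [NormedAddCommGroup X] (A : Set (X → X)) (W : Set X) : Prop :=
  ∃ C : ℝ, ∀ f ∈ A, ∀ x ∈ W, ‖f x‖ ≤ C * ‖x‖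

/-- `famPow A m` = 𝒜^m, the set of m-fold compositions of maps from `A` (with 𝒜^0 = {id}). -/
def famPow {X : Type*} (A : Set (X → X)) : ℕ → Set (X → X)
  | 0 => {id}
  | m + 1 => {h | ∃ f ∈ A, ∃ g ∈ famPow A m, h = f ∘ g}

/-- The composition of two families of maps. -/
def compFam {X : Type*} (A B : Set (X → X)) : Set (X → X) :=
  {h | ∃ f ∈ A, ∃ g ∈ B, h = f ∘ g}

/-- The Bonsall cone spectral radius r(f) = inf_{n>0} ‖f^n‖^{1/n}. -/
def coneSpecRad {X : Type*} [NormedAddCommGroup X] (f : X → X) (W : Set X) : ℝ :=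
  ⨅ n : ℕ+, (opNormW (f^[(n : ℕ)]) W) ^ (((n : ℕ) : ℝ)⁻¹)

/-- sup_{f ∈ 𝒜^m} ‖f‖^{1/m}. -/
def jointTerm {X : Type*} [NormedAddCommGroup X] (A : Set (X → X)) (W : Set X) (m : ℕ) : ℝ :=
  sSup ((fun f => (opNormW f W) ^ ((m : ℝ)⁻¹)) '' famPow A m)

/-- sup_{f ∈ 𝒜^m} r(f)^{1/m}. -/
def genTerm {X : Type*} [NormedAddCommGroup X] (A : Set (X → X)) (W : Set X) (m : ℕ) : ℝ :=
  sSup ((fun f => (coneSpecRad f W) ^ ((m : ℝ)⁻¹)) '' famPow A m)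

/-- The joint spectral radius r̂(𝒜) = inf_{m>0} sup_{f ∈ 𝒜^m} ‖f‖^{1/m}. -/
def jointRad {X : Type*} [NormedAddCommGroup X] (A : Set (X → X)) (W : Set X) : ℝ :=
  ⨅ m : ℕ+, jointTerm A W (m : ℕ)

/-- The generalized spectral radius r(𝒜) = sup_{m>0} sup_{f ∈ 𝒜^m} r(f)^{1/m}. -/
def genRad {X : Type*} [NormedAddCommGroup X] (A : Set (X → X)) (W : Set X) : ℝ :=
  ⨆ m : ℕ+, genTerm A W (m : ℕ)

/-- β_m = inf_{f ∈ 𝒜^m} ‖f‖. -/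
def subBeta {X : Type*} [NormedAddCommGroup X] (A : Set (X → X)) (W : Set X) (m : ℕ) : ℝ :=
  sInf ((fun f => opNormW f W) '' famPow A m)

/-- γ_m = inf_{f ∈ 𝒜^m} r(f). -/
def subGamma {X : Type*} [NormedAddCommGroup X] (A : Set (X → X)) (W : Set X) (m : ℕ) : ℝ :=
  sInf ((fun f => coneSpecRad f W) '' famPow A m)

/-- F_m^d = f_m ∘ ⋯ ∘ f_1 for a sequence d of maps. -/
def seqComp {X : Type*} (d : ℕ → X → X) : ℕ → X → X
  | 0 => id
  | m + 1 => d m ∘ seqComp d m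

/-- The standard cone ℝⁿ_{≥0}. -/
def stdCone (n : ℕ) : Set (Fin n → ℝ) := {x | ∀ i, 0 ≤ x i}

/-- The closed face F_J of the standard cone. -/
def stdFace {n : ℕ} (J : Set (Fin n)) : Set (Fin n → ℝ) :=
  {x | (∀ i, 0 ≤ x i) ∧ ∀ i ∉ J, x i = 0}

/-- A family of maps on ℝⁿ_{≥0} is irreducible if no non-trivial closed face is invariant
under every member of the family. -/
def IrreducibleFam {n : ℕ} (A : Set ((Fin n → ℝ) → Fin n → ℝ)) : Prop :=
  ¬ ∃ J : Set (Fin n), J.Nonempty ∧ J ≠ Set.univ ∧ ∀ f ∈ A, Set.MapsTo f (stdFace J) (stdFace J)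

/-- ‖x‖_* = sup_{f ∈ 𝒜*} ν(f(|x|)). -/
def nuStar {n : ℕ} (A : Set ((Fin n → ℝ) → Fin n → ℝ)) (ν : (Fin n → ℝ) → ℝ) :
    (Fin n → ℝ) → ℝ :=
  fun x => sSup ((fun f => ν (f (fun i => |x i|))) '' ⋃ m, famPow A m)


/-! ### Auxiliary development -/

section AuxDev

variable {n : ℕ}

local notation "V" => Fin n → ℝ

/-- Bundled "good map" predicate in componentwise language. -/
def GoodMap {n : ℕ} (f : (Fin n → ℝ) → (Fin n → ℝ)) : Prop :=
  (∀ x, 0 ≤ x → 0 ≤ f x) ∧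
  (∀ c : ℝ, 0 < c → ∀ x, 0 ≤ x → f (c • x) = c • f x) ∧
  (∀ x y, 0 ≤ x → x ≤ y → f x ≤ f y) ∧
  (∀ x y, 0 ≤ x → 0 ≤ y → f (x + y) ≤ f x + f y)

lemma mem_stdCone_iff {x : V} : x ∈ stdCone n ↔ 0 ≤ x := by
  simp [stdCone, Pi.le_def]

lemma goodMap_of {f : V → V}
    (h : HomogOn f (stdCone n) ∧ OrderPresOn f (stdCone n) ∧ SubaddOn f (stdCone n)) :
    GoodMap f := by
  obtain ⟨⟨hmaps, hhom⟩, hord, hsub⟩ := h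
  refine ⟨?_, ?_, ?_, ?_⟩
  · intro x hx
    exact mem_stdCone_iff.1 (hmaps (mem_stdCone_iff.2 hx))
  · intro c hc x hx
    exact hhom c hc x (mem_stdCone_iff.2 hx)
  · intro x y hx hxy
    have hy : 0 ≤ y := le_trans hx hxy
    have := hord x (mem_stdCone_iff.2 hx) y (mem_stdCone_iff.2 hy)
      (mem_stdCone_iff.2 (by simpa [Pi.le_def, sub_nonneg] using fun i => hxy i))
    intro i
    have hi := (mem_stdCone_iff.1 this) i
    simpa [sub_nonneg] using hi
  · intro x y hx hy
    have := hsub x (mem_stdCone_iff.2 hx) y (mem_stdCone_iff.2 hy)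
    intro i
    have hi := (mem_stdCone_iff.1 this) i
    simpa [sub_nonneg] using hi

lemma goodMap_id : GoodMap (id : V → V) :=
  ⟨fun _ hx => hx, fun _ _ _ _ => rfl, fun _ _ _ h => h, fun _ _ _ _ => le_rfl⟩

lemma goodMap_comp {f g : V → V} (hf : GoodMap f) (hg : GoodMap g) :
    GoodMap (f ∘ g) := by
  obtain ⟨hf0, hfh, hfm, hfs⟩ := hf
  obtain ⟨hg0, hgh, hgm, hgs⟩ := hg
  refine ⟨fun x hx => hf0 _ (hg0 _ hx), ?_, ?_, ?_⟩
  · intro c hc x hx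
    simp only [Function.comp_apply]
    rw [hgh c hc x hx, hfh c hc _ (hg0 _ hx)]
  · intro x y hx hxy
    exact hfm _ _ (hg0 _ hx) (hgm _ _ hx hxy)
  · intro x y hx hy
    calc f (g (x + y)) ≤ f (g x + g y) := hfm _ _ (hg0 _ (add_nonneg hx hy)) (hgs x y hx hy)
    _ ≤ f (g x) + f (g y) := hfs _ _ (hg0 _ hx) (hg0 _ hy)

lemma GoodMap.map_zero {f : V → V} (hf : GoodMap f) : f 0 = 0 := by
  have h := hf.2.1 2 two_pos 0 le_rfl
  rw [smul_zero] at h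
  funext i
  have := congrFun h i
  simp only [Pi.smul_apply, smul_eq_mul] at this
  show f 0 i = (0:ℝ)
  linarith

lemma goodMap_famPow {A : Set (V → V)} (hA : ∀ f ∈ A, GoodMap f) :
    ∀ m, ∀ g ∈ famPow A m, GoodMap g := by
  intro m
  induction m with
  | zero => intro g hg; rw [famPow] at hg; rw [Set.mem_singleton_iff.1 hg]; exact goodMap_id
  | succ m ih =>
    rintro g ⟨f, hf, g', hg', rfl⟩
    exact goodMap_comp (hA f hf) (ih g' hg')

lemma famPow_comp {A : Set (V → V)} :
    ∀ a, ∀ g ∈ famPow A a, ∀ b, ∀ h ∈ famPow A b, g ∘ h ∈ famPow A (a + b) := by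
  intro a
  induction a with
  | zero =>
    intro g hg b h hh
    rw [famPow] at hg
    rw [Set.mem_singleton_iff.1 hg]
    simpa [Nat.zero_add] using hh
  | succ a ih =>
    rintro g ⟨f, hf, g', hg', rfl⟩ b h hh
    have : (a + 1) + b = (a + b) + 1 := by omega
    rw [this]
    exact ⟨f, hf, g' ∘ h, ih g' hg' b h hh, rfl⟩

lemma famPow_split {A : Set (V → V)} :
    ∀ a b, ∀ g ∈ famPow A (a + b), ∃ g₁ ∈ famPow A a, ∃ g₂ ∈ famPow A b, g = g₁ ∘ g₂ := by
  intro a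
  induction a with
  | zero =>
    intro b g hg
    exact ⟨id, by rw [famPow]; exact Set.mem_singleton _, g, by simpa [Nat.zero_add] using hg, rfl⟩
  | succ a ih =>
    intro b g hg
    have : (a + 1) + b = (a + b) + 1 := by omega
    rw [this] at hg
    obtain ⟨f, hf, g', hg', rfl⟩ := hg
    obtain ⟨g₁, hg₁, g₂, hg₂, rfl⟩ := ih b g' hg'
    exact ⟨f ∘ g₁, ⟨f, hf, g₁, hg₁, rfl⟩, g₂, hg₂, rfl⟩

lemma norm_mono_pi {x y : V} (h0 : 0 ≤ x) (h : x ≤ y) : ‖x‖ ≤ ‖y‖ := by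
  rw [pi_norm_le_iff_of_nonneg (norm_nonneg y)]
  intro i
  calc ‖x i‖ = x i := Real.norm_of_nonneg (h0 i)
  _ ≤ y i := h i
  _ ≤ ‖y i‖ := le_abs_self _
  _ ≤ ‖y‖ := norm_le_pi_norm y i

lemma famPow_bound {A : Set (V → V)} (hA : ∀ f ∈ A, GoodMap f) {C : ℝ} (hC1 : 1 ≤ C)
    (hC : ∀ f ∈ A, ∀ x : V, 0 ≤ x → ‖f x‖ ≤ C * ‖x‖) :
    ∀ m, ∀ g ∈ famPow A m, ∀ x : V, 0 ≤ x → ‖g x‖ ≤ C ^ m * ‖x‖ := by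
  intro m
  induction m with
  | zero =>
    intro g hg x hx
    rw [famPow] at hg
    rw [Set.mem_singleton_iff.1 hg]
    simp
  | succ m ih =>
    rintro g ⟨f, hf, g', hg', rfl⟩ x hx
    have hg'x : 0 ≤ g' x := (goodMap_famPow hA m g' hg').1 x hx
    calc ‖f (g' x)‖ ≤ C * ‖g' x‖ := hC f hf _ hg'x
    _ ≤ C * (C ^ m * ‖x‖) := by
        have := ih g' hg' x hx
        nlinarith [norm_nonneg (g' x)]
    _ = C ^ (m + 1) * ‖x‖ := by ring

lemma pi_norm_abs (v : V) : ‖(fun i => |v i| : V)‖ = ‖v‖ := by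
  apply le_antisymm
  · rw [pi_norm_le_iff_of_nonneg (norm_nonneg v)]
    intro i
    simpa [Real.norm_eq_abs, abs_abs] using norm_le_pi_norm v i
  · rw [pi_norm_le_iff_of_nonneg (norm_nonneg (fun i => |v i| : V))]
    intro i
    simpa [Real.norm_eq_abs, abs_abs] using norm_le_pi_norm (fun i => |v i| : V) i

lemma good_lipschitz {g : V → V} (hg : GoodMap g) {B : ℝ}
    (hB : ∀ x : V, 0 ≤ x → ‖g x‖ ≤ B * ‖x‖) (x y : V) (hx : 0 ≤ x) (hy : 0 ≤ y) :
    ‖g x - g y‖ ≤ B * ‖x - y‖ := by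
  set d : V := fun i => |x i - y i| with hd_def
  have hd : 0 ≤ d := fun i => abs_nonneg _
  have hxd : x ≤ y + d := by
    intro i
    have := le_abs_self (x i - y i)
    simp only [Pi.add_apply, hd_def]
    linarith
  have hyd : y ≤ x + d := by
    intro i
    have := neg_abs_le (x i - y i)
    simp only [Pi.add_apply, hd_def]
    linarith
  have h1 : g x ≤ g y + g d :=
    le_trans (hg.2.2.1 x (y + d) hx hxd) (hg.2.2.2 y d hy hd)
  have h2 : g y ≤ g x + g d :=
    le_trans (hg.2.2.1 y (x + d) hy hyd) (hg.2.2.2 x d hx hd)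
  have key : ∀ i, |g x i - g y i| ≤ g d i := by
    intro i
    rw [abs_le]
    constructor
    · have := h2 i; simp only [Pi.add_apply] at this; linarith
    · have := h1 i; simp only [Pi.add_apply] at this; linarith
  have hnorm : ‖g x - g y‖ ≤ ‖g d‖ := by
    rw [pi_norm_le_iff_of_nonneg (norm_nonneg (g d))]
    intro i
    calc ‖(g x - g y) i‖ = |g x i - g y i| := by simp [Real.norm_eq_abs]
    _ ≤ g d i := key i
    _ ≤ ‖g d i‖ := le_abs_self _
    _ ≤ ‖g d‖ := norm_le_pi_norm _ i
  calc ‖g x - g y‖ ≤ ‖g d‖ := hnorm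
  _ ≤ B * ‖d‖ := hB d hd
  _ = B * ‖x - y‖ := by
      congr 1
      have : d = fun i => |(x - y) i| := by funext i; simp [hd_def]
      rw [this, pi_norm_abs]

lemma good_sum_le {g : V → V} (hg : GoodMap g) {ι : Type*} (s : Finset ι) (v : ι → V)
    (hv : ∀ i, 0 ≤ v i) : g (∑ i ∈ s, v i) ≤ ∑ i ∈ s, g (v i) := by
  classical
  induction s using Finset.cons_induction with
  | empty => simp [hg.map_zero]
  | cons a s' ha ih =>
    rw [Finset.sum_cons, Finset.sum_cons]
    calc g (v a + ∑ i ∈ s', v i) ≤ g (v a) + g (∑ i ∈ s', v i) :=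
        hg.2.2.2 _ _ (hv a) (Finset.sum_nonneg fun i _ => hv i)
    _ ≤ g (v a) + ∑ i ∈ s', g (v i) := add_le_add le_rfl ih

end AuxDev

section BddDev

variable {n : ℕ}

local notation "V" => Fin n → ℝ

lemma single_smul_one (i : Fin n) (c : ℝ) : c • (Pi.single i 1 : V) = Pi.single i c := by
  funext j
  by_cases h : j = i <;> simp [Pi.single_apply, h]

lemma single_nonneg' {i : Fin n} {c : ℝ} (hc : 0 ≤ c) : (0:V) ≤ Pi.single i c := by
  intro j
  by_cases h : j = i <;> simp [Pi.single_apply, h, hc]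

/-- Pointwise bounded orbit under the semigroup generated by `A`. -/
def OrbBdd {n : ℕ} (A : Set ((Fin n → ℝ) → Fin n → ℝ)) (x : Fin n → ℝ) : Prop :=
  ∃ B : ℝ, ∀ m, ∀ g ∈ famPow A m, ‖g x‖ ≤ B

theorem semigroup_bounded (A : Set (V → V))
    (hA : ∀ f ∈ A, HomogOn f (stdCone n) ∧ OrderPresOn f (stdCone n) ∧ SubaddOn f (stdCone n))
    (hbdd : BoundedFamOn A (stdCone n))
    (hirr : IrreducibleFam A)
    (hr : jointRad A (stdCone n) = 1) :
    ∀ x : V, 0 ≤ x → OrbBdd A x := by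
  classical
  have hAg : ∀ f ∈ A, GoodMap f := fun f hf => goodMap_of (hA f hf)
  obtain ⟨C₀, hC₀⟩ := hbdd
  set C := max C₀ 1 with hC_def
  have hC1 : 1 ≤ C := le_max_right _ _
  have hCpos : (0:ℝ) < C := lt_of_lt_of_le one_pos hC1
  have hC : ∀ f ∈ A, ∀ x : V, 0 ≤ x → ‖f x‖ ≤ C * ‖x‖ := by
    intro f hf x hx
    calc ‖f x‖ ≤ C₀ * ‖x‖ := hC₀ f hf x (mem_stdCone_iff.2 hx)
    _ ≤ C * ‖x‖ := by
        have h1 := norm_nonneg x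
        have h2 : C₀ ≤ C := le_max_left _ _
        nlinarith
  have hGood : ∀ m, ∀ g ∈ famPow A m, GoodMap g := goodMap_famPow hAg
  have hBnd : ∀ m, ∀ g ∈ famPow A m, ∀ x : V, 0 ≤ x → ‖g x‖ ≤ C ^ m * ‖x‖ :=
    famPow_bound hAg hC1 hC
  have hid0 : (id : V → V) ∈ famPow A 0 := by rw [famPow]; exact Set.mem_singleton _
  -- basic closure properties of bounded orbits
  have hPmono : ∀ x y : V, 0 ≤ x → x ≤ y → OrbBdd A y → OrbBdd A x := by
    rintro x y hx hxy ⟨B, hB⟩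
    exact ⟨B, fun m g hg => le_trans (norm_mono_pi ((hGood m g hg).1 x hx)
      ((hGood m g hg).2.2.1 x y hx hxy)) (hB m g hg)⟩
  have hPsmul : ∀ c : ℝ, 0 < c → ∀ x : V, 0 ≤ x → OrbBdd A x → OrbBdd A (c • x) := by
    rintro c hc x hx ⟨B, hB⟩
    refine ⟨c * B, fun m g hg => ?_⟩
    rw [(hGood m g hg).2.1 c hc x hx, norm_smul, Real.norm_eq_abs, abs_of_pos hc]
    exact mul_le_mul_of_nonneg_left (hB m g hg) (le_of_lt hc)
  have hP0 : OrbBdd A 0 := ⟨0, fun m g hg => by rw [(hGood m g hg).map_zero]; simp⟩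
  have hPsum : ∀ x : V, 0 ≤ x → (∀ i, x i ≠ 0 → OrbBdd A (Pi.single i 1)) → OrbBdd A x := by
    intro x hx hxi
    have hsingle : ∀ i : Fin n, OrbBdd A (Pi.single i (x i)) := by
      intro i
      by_cases hxi0 : x i = 0
      · rw [hxi0]
        have : (Pi.single i (0:ℝ) : V) = 0 := by simp
        rw [this]; exact hP0
      · have hxipos : 0 < x i := lt_of_le_of_ne (hx i) (Ne.symm hxi0)
        have := hPsmul (x i) hxipos _ (single_nonneg' zero_le_one) (hxi i hxi0)
        rwa [single_smul_one] at this
    choose Bi hBi using hsingle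
    refine ⟨∑ i, Bi i, fun m g hg => ?_⟩
    have hle : g x ≤ ∑ i, g (Pi.single i (x i)) := by
      have := good_sum_le (hGood m g hg) Finset.univ (fun i => (Pi.single i (x i) : V))
        (fun i => single_nonneg' (hx i))
      rwa [Finset.univ_sum_single] at this
    calc ‖g x‖ ≤ ‖∑ i, g (Pi.single i (x i))‖ := norm_mono_pi ((hGood m g hg).1 x hx) hle
    _ ≤ ∑ i, ‖g (Pi.single i (x i))‖ := norm_sum_le _ _
    _ ≤ ∑ i, Bi i := Finset.sum_le_sum fun i _ => hBi i m g hg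
  by_cases hall : ∀ i : Fin n, OrbBdd A (Pi.single i 1)
  · exact fun x hx => hPsum x hx fun i _ => hall i
  · exfalso
    push_neg at hall
    obtain ⟨i₀, hi₀⟩ := hall
    by_cases hsome : ∃ i : Fin n, OrbBdd A (Pi.single i 1)
    · -- contradiction with irreducibility
      apply hirr
      refine ⟨{i | OrbBdd A (Pi.single i 1)}, hsome, ?_, ?_⟩
      · intro hJ
        have : i₀ ∈ {i | OrbBdd A (Pi.single i 1)} := by rw [hJ]; trivial
        exact hi₀ this
      · intro f hf x hxF
        obtain ⟨hx0, hxJ⟩ := hxF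
        have hx0' : (0:V) ≤ x := hx0
        have hPx : OrbBdd A x := by
          refine hPsum x hx0' fun i hxi => ?_
          by_contra hPi
          exact hxi (hxJ i hPi)
        have hPfx : OrbBdd A (f x) := by
          obtain ⟨B, hB⟩ := hPx
          refine ⟨B, fun m g hg => ?_⟩
          have hgf : g ∘ f ∈ famPow A (m + 1) :=
            famPow_comp m g hg 1 f ⟨f, hf, id, hid0, (Function.comp_id f).symm⟩
          exact hB (m + 1) (g ∘ f) hgf
        have hfx0 : (0:V) ≤ f x := (hAg f hf).1 x hx0'
        refine ⟨fun i => hfx0 i, ?_⟩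
        intro i hiJ
        by_contra hfxi
        have hpos : 0 < f x i := lt_of_le_of_ne (hfx0 i) (Ne.symm hfxi)
        have hsle : (Pi.single i (f x i) : V) ≤ f x := by
          intro j
          by_cases h : j = i
          · subst h; simp
          · simp [Pi.single_apply, h]; exact hfx0 j
        have h1 : OrbBdd A (Pi.single i (f x i)) :=
          hPmono _ _ (single_nonneg' (le_of_lt hpos)) hsle hPfx
        have h2 : OrbBdd A (Pi.single i 1) := by
          have := hPsmul (f x i)⁻¹ (inv_pos.2 hpos) _ (single_nonneg' (le_of_lt hpos)) h1
          have heq : (f x i)⁻¹ • (Pi.single i (f x i) : V) = Pi.single i 1 := by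
            funext j
            by_cases h : j = i <;>
              simp [Pi.single_apply, h, inv_mul_cancel₀ (ne_of_gt hpos)]
          rwa [heq] at this
        exact hiJ h2
    · -- the analytic contradiction
      push_neg at hsome
      haveI : Nonempty (Fin n) := ⟨i₀⟩
      -- every nonzero point of the cone has unbounded orbit
      have hunb : ∀ x : V, 0 ≤ x → ‖x‖ = 1 → ∀ R : ℝ, ∃ m, ∃ g ∈ famPow A m, R < ‖g x‖ := by
        intro x hx hx1 R
        have hxne : x ≠ 0 := by
          intro h; rw [h, norm_zero] at hx1; norm_num at hx1
        obtain ⟨i, hi⟩ : ∃ i, x i ≠ 0 := by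
          by_contra h; push_neg at h; exact hxne (funext h)
        have hipos : 0 < x i := lt_of_le_of_ne (hx i) (Ne.symm hi)
        have hnotP := hsome i
        rw [OrbBdd] at hnotP
        push_neg at hnotP
        obtain ⟨m, g, hg, hgB⟩ := hnotP (R / x i)
        refine ⟨m, g, hg, ?_⟩
        have h1 : ‖g (Pi.single i (x i))‖ = x i * ‖g (Pi.single i 1)‖ := by
          rw [← single_smul_one, (hGood m g hg).2.1 (x i) hipos _ (single_nonneg' zero_le_one),
            norm_smul, Real.norm_eq_abs, abs_of_pos hipos]
        have hsle : (Pi.single i (x i) : V) ≤ x := by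
          intro j
          by_cases h : j = i
          · subst h; simp
          · simp [Pi.single_apply, h]; exact hx j
        have h2 : ‖g (Pi.single i (x i))‖ ≤ ‖g x‖ :=
          norm_mono_pi ((hGood m g hg).1 _ (single_nonneg' (le_of_lt hipos)))
            ((hGood m g hg).2.2.1 _ _ (single_nonneg' (le_of_lt hipos)) hsle)
        have h3 : R < x i * ‖g (Pi.single i 1)‖ := by
          rw [div_lt_iff₀ hipos] at hgB
          nlinarith
        linarith [h1 ▸ h3, h2]
      -- compact covering: uniform norm-doubling in uniformly bounded length
      have hstepEx : ∃ M : ℕ, ∀ y : V, 0 ≤ y → y ≠ 0 →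
          ∃ m ≤ M, ∃ g ∈ famPow A m, 2 * ‖y‖ ≤ ‖g y‖ := by
        set K : Set V := {x | 0 ≤ x ∧ ‖x‖ = 1} with hK_def
        have hKc : IsCompact K := by
          apply Metric.isCompact_of_isClosed_isBounded
          · have h1 : IsClosed {x : V | 0 ≤ x} := by
              have : {x : V | 0 ≤ x} = ⋂ i, {x : V | 0 ≤ x i} := by
                ext x; simp [Pi.le_def]
              rw [this]
              exact isClosed_iInter fun i => isClosed_le continuous_const (continuous_apply i)
            have h2 : IsClosed {x : V | ‖x‖ = 1} := isClosed_eq continuous_norm continuous_const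
            exact h1.inter h2
          · apply Bornology.IsBounded.subset (Metric.isBounded_closedBall (x := (0:V)) (r := 1))
            intro x hx
            rw [Metric.mem_closedBall, dist_zero_right]
            exact le_of_eq hx.2
        have hpick : ∀ x : K, ∃ δ : ℝ, 0 < δ ∧ ∃ m, ∃ g, g ∈ famPow A m ∧
            ∀ y ∈ K, dist y (x:V) < δ → 2 ≤ ‖g y‖ := by
          rintro ⟨x, hx0, hx1⟩
          obtain ⟨m, g, hg, hgx⟩ := hunb x hx0 hx1 4
          refine ⟨2 / C ^ m, by positivity, m, g, hg, ?_⟩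
          rintro y ⟨hy0, _⟩ hdist
          have hlip := good_lipschitz (hGood m g hg) (fun z hz => hBnd m g hg z hz) x y hx0 hy0
          have hCm : (0:ℝ) < C ^ m := pow_pos hCpos m
          have hxy : ‖x - y‖ < 2 / C ^ m := by
            rw [← dist_eq_norm, dist_comm]
            exact hdist
          have hxy2 : ‖x - y‖ * C ^ m < 2 := by rwa [lt_div_iff₀ hCm] at hxy
          have h5 : ‖g x - g y‖ < 2 :=
            lt_of_le_of_lt hlip (by rw [mul_comm]; exact hxy2)
          have h6 : ‖g x‖ - ‖g y‖ ≤ ‖g x - g y‖ := norm_sub_norm_le _ _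
          linarith
        choose δ hδ mm gg hgg hball using hpick
        obtain ⟨t, ht⟩ := hKc.elim_finite_subcover (fun x : K => Metric.ball (x:V) (δ x))
          (fun x => Metric.isOpen_ball)
          (fun y hy => Set.mem_iUnion.2 ⟨⟨y, hy⟩, Metric.mem_ball_self (hδ ⟨y, hy⟩)⟩)
        refine ⟨t.sup mm, ?_⟩
        intro y hy hyne
        have hny : 0 < ‖y‖ := norm_pos_iff.2 hyne
        set z : V := ‖y‖⁻¹ • y with hz_def
        have hz0 : 0 ≤ z := fun i => mul_nonneg (inv_nonneg.2 (norm_nonneg y)) (hy i)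
        have hz1 : ‖z‖ = 1 := by
          rw [hz_def, norm_smul, Real.norm_eq_abs, abs_of_pos (inv_pos.2 hny),
            inv_mul_cancel₀ (ne_of_gt hny)]
        have hzK : z ∈ K := ⟨hz0, hz1⟩
        obtain ⟨x, hxt, hzb⟩ : ∃ x ∈ t, z ∈ Metric.ball (x:V) (δ x) := by
          have := ht hzK
          simpa using this
        refine ⟨mm x, Finset.le_sup hxt, gg x, hgg x, ?_⟩
        have h2 : 2 ≤ ‖gg x z‖ := hball x z hzK (Metric.mem_ball.1 hzb)
        have hyz : gg x y = ‖y‖ • gg x z := by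
          have hy_eq : y = ‖y‖ • z := by
            rw [hz_def, smul_smul, mul_inv_cancel₀ (ne_of_gt hny), one_smul]
          calc gg x y = gg x (‖y‖ • z) := by rw [← hy_eq]
          _ = ‖y‖ • gg x z := (hGood (mm x) (gg x) (hgg x)).2.1 ‖y‖ hny z hz0
        rw [hyz, norm_smul, Real.norm_eq_abs, abs_of_pos hny]
        nlinarith
      obtain ⟨M, hstep⟩ := hstepEx
      -- small ε with (1+ε)^M ≤ 3/2
      obtain ⟨ε, hε0, hεM⟩ : ∃ ε : ℝ, 0 < ε ∧ (1 + ε) ^ M ≤ 3/2 := by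
        have hcont : ContinuousAt (fun ε : ℝ => (1 + ε) ^ M) 0 := by fun_prop
        have h0 : (1 + (0:ℝ)) ^ M = 1 := by simp
        have htd : Tendsto (fun ε : ℝ => (1 + ε) ^ M) (nhds 0) (nhds 1) := by
          simpa [ContinuousAt, h0] using hcont
        have hev : ∀ᶠ ε in nhds (0:ℝ), (1 + ε) ^ M < 3/2 :=
          htd.eventually_lt_const (by norm_num)
        have hev' : ∀ᶠ ε in nhdsWithin (0:ℝ) (Set.Ioi 0), (1 + ε) ^ M < 3/2 :=
          hev.filter_mono nhdsWithin_le_nhds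
        have hmem : ∀ᶠ ε in nhdsWithin (0:ℝ) (Set.Ioi 0), ε ∈ Set.Ioi (0:ℝ) :=
          eventually_mem_nhdsWithin
        obtain ⟨ε, h1, h2⟩ := (hev'.and hmem).exists
        exact ⟨ε, h2, le_of_lt h1⟩
      -- extract a block length from the joint spectral radius hypothesis
      obtain ⟨m₀, hm₀⟩ : ∃ m₀ : ℕ+, jointTerm A (stdCone n) (m₀:ℕ) < 1 + ε := by
        have hlt : jointRad A (stdCone n) < 1 + ε := by rw [hr]; linarith
        rw [jointRad] at hlt
        exact exists_lt_of_ciInf_lt hlt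
      -- norm bound for blocks of length m₀
      have hopfacts : ∀ g ∈ famPow A (m₀:ℕ),
          0 ≤ opNormW g (stdCone n) ∧ opNormW g (stdCone n) ≤ C ^ (m₀:ℕ) ∧
          ∀ x : V, 0 ≤ x → ‖g x‖ ≤ opNormW g (stdCone n) * ‖x‖ := by
        intro g hg
        have hSbdd : BddAbove ((fun x => ‖g x‖) '' {x ∈ stdCone n | ‖x‖ = 1}) := by
          refine ⟨C ^ (m₀:ℕ), ?_⟩
          rintro _ ⟨z, ⟨hz1, hz2⟩, rfl⟩
          have := hBnd (m₀:ℕ) g hg z (mem_stdCone_iff.1 hz1)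
          rwa [hz2, mul_one] at this
        have hop0 : 0 ≤ opNormW g (stdCone n) := by
          rw [opNormW]
          exact Real.sSup_nonneg (by rintro _ ⟨z, hz, rfl⟩; exact norm_nonneg _)
        have hopC : opNormW g (stdCone n) ≤ C ^ (m₀:ℕ) := by
          rw [opNormW]
          refine Real.sSup_le ?_ (by positivity)
          rintro _ ⟨z, ⟨hz1, hz2⟩, rfl⟩
          have := hBnd (m₀:ℕ) g hg z (mem_stdCone_iff.1 hz1)
          rwa [hz2, mul_one] at this
        refine ⟨hop0, hopC, ?_⟩
        intro x hx
        by_cases hx0 : x = 0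
        · subst hx0
          rw [(hGood _ g hg).map_zero]
          simp
        · have hnx : 0 < ‖x‖ := norm_pos_iff.2 hx0
          set z : V := ‖x‖⁻¹ • x with hz_def
          have hz0 : 0 ≤ z := fun i => mul_nonneg (inv_nonneg.2 (norm_nonneg x)) (hx i)
          have hz1 : ‖z‖ = 1 := by
            rw [hz_def, norm_smul, Real.norm_eq_abs, abs_of_pos (inv_pos.2 hnx),
              inv_mul_cancel₀ (ne_of_gt hnx)]
          have hmem : ‖g z‖ ∈ (fun x => ‖g x‖) '' {x ∈ stdCone n | ‖x‖ = 1} :=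
            ⟨z, ⟨mem_stdCone_iff.2 hz0, hz1⟩, rfl⟩
          have hle : ‖g z‖ ≤ opNormW g (stdCone n) := by
            rw [opNormW]; exact le_csSup hSbdd hmem
          have hxz : g x = ‖x‖ • g z := by
            have hx_eq : x = ‖x‖ • z := by
              rw [hz_def, smul_smul, mul_inv_cancel₀ (ne_of_gt hnx), one_smul]
            calc g x = g (‖x‖ • z) := by rw [← hx_eq]
            _ = ‖x‖ • g z := (hGood _ g hg).2.1 ‖x‖ hnx z hz0
          rw [hxz, norm_smul, Real.norm_eq_abs, abs_of_pos hnx]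
          nlinarith
      have hblock : ∀ g ∈ famPow A (m₀:ℕ), ∀ x : V, 0 ≤ x →
          ‖g x‖ ≤ (1 + ε) ^ (m₀:ℕ) * ‖x‖ := by
        intro g hg x hx
        obtain ⟨hop0, hopC, hopx⟩ := hopfacts g hg
        have hople : opNormW g (stdCone n) ≤ (1 + ε) ^ (m₀:ℕ) := by
          have hTbdd : BddAbove
              ((fun f => (opNormW f (stdCone n)) ^ (((m₀:ℕ):ℝ)⁻¹)) '' famPow A (m₀:ℕ)) := by
            refine ⟨(C ^ (m₀:ℕ)) ^ (((m₀:ℕ):ℝ)⁻¹), ?_⟩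
            rintro _ ⟨f, hf, rfl⟩
            exact Real.rpow_le_rpow (hopfacts f hf).1 (hopfacts f hf).2.1
              (by positivity)
          have h1 : (opNormW g (stdCone n)) ^ (((m₀:ℕ):ℝ)⁻¹) ≤
              jointTerm A (stdCone n) (m₀:ℕ) := by
            rw [jointTerm]
            exact le_csSup hTbdd ⟨g, hg, rfl⟩
          have h2 : (opNormW g (stdCone n)) ^ (((m₀:ℕ):ℝ)⁻¹) ≤ 1 + ε :=
            le_of_lt (lt_of_le_of_lt h1 hm₀)
          have h3 : opNormW g (stdCone n) =
              ((opNormW g (stdCone n)) ^ (((m₀:ℕ):ℝ)⁻¹)) ^ (m₀:ℕ) :=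
            (Real.rpow_inv_natCast_pow hop0 m₀.ne_zero).symm
          rw [h3]
          exact pow_le_pow_left₀ (Real.rpow_nonneg hop0 _) h2 _
        calc ‖g x‖ ≤ opNormW g (stdCone n) * ‖x‖ := hopx x hx
        _ ≤ (1 + ε) ^ (m₀:ℕ) * ‖x‖ := mul_le_mul_of_nonneg_right hople (norm_nonneg x)
      -- global growth bound
      have hglob : ∀ m, ∀ g ∈ famPow A m, ∀ x : V, 0 ≤ x →
          ‖g x‖ ≤ (1 + ε) ^ m * C ^ (m₀:ℕ) * ‖x‖ := by
        intro m
        induction m using Nat.strong_induction_on with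
        | _ m IH =>
          intro g hg x hx
          by_cases hm : m < (m₀:ℕ)
          · have h1 : C ^ m ≤ C ^ (m₀:ℕ) := pow_le_pow_right₀ hC1 (le_of_lt hm)
            have h2 : (1:ℝ) ≤ (1 + ε) ^ m := by
              calc (1:ℝ) = 1 ^ m := (one_pow m).symm
              _ ≤ (1 + ε) ^ m := pow_le_pow_left₀ zero_le_one (by linarith) m
            have h3 := hBnd m g hg x hx
            calc ‖g x‖ ≤ C ^ m * ‖x‖ := h3
            _ ≤ C ^ (m₀:ℕ) * ‖x‖ := mul_le_mul_of_nonneg_right h1 (norm_nonneg x)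
            _ = 1 * (C ^ (m₀:ℕ) * ‖x‖) := by ring
            _ ≤ (1 + ε) ^ m * (C ^ (m₀:ℕ) * ‖x‖) :=
                mul_le_mul_of_nonneg_right h2 (by positivity)
            _ = (1 + ε) ^ m * C ^ (m₀:ℕ) * ‖x‖ := by ring
          · push_neg at hm
            have hsplit : g ∈ famPow A ((m₀:ℕ) + (m - (m₀:ℕ))) := by
              rwa [Nat.add_sub_cancel' hm]
            obtain ⟨g₁, hg₁, g₂, hg₂, rfl⟩ := famPow_split (m₀:ℕ) (m - (m₀:ℕ)) g hsplit
            have hg₂x : (0:V) ≤ g₂ x := (hGood _ g₂ hg₂).1 x hx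
            have hIH := IH (m - (m₀:ℕ)) (by have := m₀.pos; omega) g₂ hg₂ x hx
            have h5 : ((g₁ ∘ g₂) x) = g₁ (g₂ x) := rfl
            rw [h5]
            calc ‖g₁ (g₂ x)‖ ≤ (1 + ε) ^ (m₀:ℕ) * ‖g₂ x‖ := hblock g₁ hg₁ _ hg₂x
            _ ≤ (1 + ε) ^ (m₀:ℕ) * ((1 + ε) ^ (m - (m₀:ℕ)) * C ^ (m₀:ℕ) * ‖x‖) :=
                mul_le_mul_of_nonneg_left hIH (by positivity)
            _ = (1 + ε) ^ ((m₀:ℕ) + (m - (m₀:ℕ))) * C ^ (m₀:ℕ) * ‖x‖ := by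
                rw [pow_add]; ring
            _ = (1 + ε) ^ m * C ^ (m₀:ℕ) * ‖x‖ := by rw [Nat.add_sub_cancel' hm]
      -- iterated doubling
      set u : V := fun _ => (1:ℝ) with hu_def
      have hu0 : (0:V) ≤ u := fun i => zero_le_one
      have hu1 : ‖u‖ = 1 := by
        apply le_antisymm
        · rw [pi_norm_le_iff_of_nonneg zero_le_one]
          intro i
          simp [hu_def]
        · calc (1:ℝ) = ‖u (Classical.arbitrary (Fin n))‖ := by simp [hu_def]
          _ ≤ ‖u‖ := norm_le_pi_norm u (Classical.arbitrary (Fin n))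
      have hiter : ∀ k : ℕ, ∃ m, m ≤ k * M ∧ ∃ g ∈ famPow A m, (2:ℝ) ^ k ≤ ‖g u‖ := by
        intro k
        induction k with
        | zero => exact ⟨0, by simp, id, hid0, by simp [hu1]⟩
        | succ k ih =>
          obtain ⟨m, hm, g, hg, h2k⟩ := ih
          have hgu0 : (0:V) ≤ g u := (hGood m g hg).1 u hu0
          have hyne : g u ≠ 0 := by
            intro h
            rw [h, norm_zero] at h2k
            have : (0:ℝ) < 2 ^ k := by positivity
            linarith
          obtain ⟨m', hm', h, hh, hstep2⟩ := hstep (g u) hgu0 hyne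
          refine ⟨m' + m, ?_, h ∘ g, famPow_comp m' h hh m g hg, ?_⟩
          · calc m' + m ≤ M + k * M := add_le_add hm' hm
            _ = (k + 1) * M := by ring
          · calc (2:ℝ) ^ (k + 1) = 2 * 2 ^ k := by ring
            _ ≤ 2 * ‖g u‖ := by linarith
            _ ≤ ‖h (g u)‖ := hstep2
      -- final contradiction
      obtain ⟨k, hk⟩ := pow_unbounded_of_one_lt (C ^ (m₀:ℕ)) (by norm_num : (1:ℝ) < 4/3)
      obtain ⟨m, hm, g, hg, h2k⟩ := hiter k
      have hup : ‖g u‖ ≤ (1 + ε) ^ m * C ^ (m₀:ℕ) := by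
        have := hglob m g hg u hu0
        rwa [hu1, mul_one] at this
      have h1 : ((1:ℝ) + ε) ^ m ≤ (3/2) ^ k := by
        calc (1 + ε) ^ m ≤ (1 + ε) ^ (k * M) := pow_le_pow_right₀ (by linarith) hm
        _ = ((1 + ε) ^ M) ^ k := by rw [← pow_mul, mul_comm]
        _ ≤ (3/2) ^ k := pow_le_pow_left₀ (by positivity) hεM k
      have h2 : (2:ℝ) ^ k ≤ (3/2) ^ k * C ^ (m₀:ℕ) := by
        have hCm0 : (0:ℝ) ≤ C ^ (m₀:ℕ) := by positivity
        calc (2:ℝ) ^ k ≤ ‖g u‖ := h2k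
        _ ≤ (1 + ε) ^ m * C ^ (m₀:ℕ) := hup
        _ ≤ (3/2) ^ k * C ^ (m₀:ℕ) := mul_le_mul_of_nonneg_right h1 hCm0
      have h3 : ((4:ℝ)/3) ^ k * (3/2) ^ k = 2 ^ k := by
        rw [← mul_pow]; norm_num
      have hp : (0:ℝ) < (3/2) ^ k := by positivity
      have h4 : ((4:ℝ)/3) ^ k ≤ C ^ (m₀:ℕ) := by
        refine le_of_mul_le_mul_right ?_ hp
        calc ((4:ℝ)/3) ^ k * (3/2) ^ k = 2 ^ k := h3
        _ ≤ (3/2) ^ k * C ^ (m₀:ℕ) := h2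
        _ = C ^ (m₀:ℕ) * (3/2) ^ k := by ring
      linarith

end BddDev

theorem statement14 {n : ℕ} (A : Set ((Fin n → ℝ) → Fin n → ℝ))
    (hA : ∀ f ∈ A, HomogOn f (stdCone n) ∧ OrderPresOn f (stdCone n) ∧
      SubaddOn f (stdCone n))
    (hbdd : BoundedFamOn A (stdCone n))
    (hirr : IrreducibleFam A)
    (hr : jointRad A (stdCone n) = 1)
    (ν : (Fin n → ℝ) → ℝ)
    (hν1 : ∀ x y, ν (x + y) ≤ ν x + ν y)
    (hν2 : ∀ (c : ℝ) (x), ν (c • x) = |c| * ν x)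
    (hν3 : ∀ x, ν x = 0 ↔ x = 0)
    (hν4 : ∀ x, 0 ≤ ν x)
    (hν5 : ∀ x y : Fin n → ℝ, (∀ i, 0 ≤ x i) → (∀ i, x i ≤ y i) → ν x ≤ ν y) :
    (∀ x y, nuStar A ν (x + y) ≤ nuStar A ν x + nuStar A ν y) ∧
    (∀ (c : ℝ) (x), nuStar A ν (c • x) = |c| * nuStar A ν x) ∧
    (∀ x, nuStar A ν x = 0 ↔ x = 0) ∧
    (∀ x, 0 ≤ nuStar A ν x) ∧
    (∀ x y : Fin n → ℝ, (∀ i, 0 ≤ x i) → (∀ i, x i ≤ y i) →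
      nuStar A ν x ≤ nuStar A ν y) ∧
    (∀ f ∈ A, ∀ x ∈ stdCone n,
      nuStar A ν (f x) ≤ jointRad A (stdCone n) * nuStar A ν x) := by
  classical
  have hAg : ∀ f ∈ A, GoodMap f := fun f hf => goodMap_of (hA f hf)
  have hGood : ∀ m, ∀ g ∈ famPow A m, GoodMap g := goodMap_famPow hAg
  have hid0 : (id : (Fin n → ℝ) → Fin n → ℝ) ∈ famPow A 0 := by
    rw [famPow]; exact Set.mem_singleton _
  have hidU : (id : (Fin n → ℝ) → Fin n → ℝ) ∈ ⋃ m, famPow A m :=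
    Set.mem_iUnion.2 ⟨0, hid0⟩
  have hUgood : ∀ g ∈ ⋃ m, famPow A m, GoodMap g := by
    intro g hg
    obtain ⟨m, hm⟩ := Set.mem_iUnion.1 hg
    exact hGood m g hm
  obtain ⟨Kν, hKν0, hKν⟩ : ∃ K : ℝ, 0 ≤ K ∧ ∀ y : Fin n → ℝ, ν y ≤ K * ‖y‖ := by
    refine ⟨∑ i, ν (Pi.single i 1), Finset.sum_nonneg fun i _ => hν4 _, fun y => ?_⟩
    have hsum : ∀ (s : Finset (Fin n)) (v : Fin n → (Fin n → ℝ)),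
        ν (∑ i ∈ s, v i) ≤ ∑ i ∈ s, ν (v i) := by
      intro s v
      induction s using Finset.cons_induction with
      | empty => simp [(hν3 0).2 rfl]
      | cons a s' ha ih =>
        rw [Finset.sum_cons, Finset.sum_cons]
        exact le_trans (hν1 _ _) (add_le_add le_rfl ih)
    calc ν y = ν (∑ i, Pi.single i (y i)) := by rw [Finset.univ_sum_single]
    _ ≤ ∑ i, ν (Pi.single i (y i)) := hsum _ _
    _ ≤ ∑ i, ν (Pi.single i 1) * ‖y‖ := by
        refine Finset.sum_le_sum fun i _ => ?_
        have h1 : ν (Pi.single i (y i)) = |y i| * ν (Pi.single i 1) := by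
          rw [← single_smul_one, hν2]
        have h2 : |y i| ≤ ‖y‖ := by
          have := norm_le_pi_norm y i
          rwa [Real.norm_eq_abs] at this
        rw [h1, mul_comm (ν (Pi.single i 1)) ‖y‖]
        exact mul_le_mul_of_nonneg_right h2 (hν4 _)
    _ = (∑ i, ν (Pi.single i 1)) * ‖y‖ := by rw [← Finset.sum_mul]
  have hbound := semigroup_bounded A hA hbdd hirr hr
  have habs : ∀ x : Fin n → ℝ, (0 : Fin n → ℝ) ≤ fun i => |x i| := fun x i => abs_nonneg _
  have hBdd : ∀ x : Fin n → ℝ,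
      BddAbove ((fun f => ν (f (fun i => |x i|))) '' ⋃ m, famPow A m) := by
    intro x
    obtain ⟨B, hB⟩ := hbound (fun i => |x i|) (habs x)
    refine ⟨Kν * B, ?_⟩
    rintro _ ⟨g, hg, rfl⟩
    obtain ⟨m, hm⟩ := Set.mem_iUnion.1 hg
    exact le_trans (hKν _) (mul_le_mul_of_nonneg_left (hB m g hm) hKν0)
  have hNE : ∀ x : Fin n → ℝ,
      ((fun f => ν (f (fun i => |x i|))) '' ⋃ m, famPow A m).Nonempty :=
    fun x => ⟨_, ⟨id, hidU, rfl⟩⟩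
  have hlow : ∀ x, ν (fun i => |x i|) ≤ nuStar A ν x :=
    fun x => le_csSup (hBdd x) ⟨id, hidU, rfl⟩
  have hpos : ∀ x, 0 ≤ nuStar A ν x := fun x => le_trans (hν4 _) (hlow x)
  have hzero : nuStar A ν 0 = 0 := by
    refine le_antisymm ?_ (hpos 0)
    refine csSup_le (hNE 0) ?_
    rintro _ ⟨g, hg, rfl⟩
    show ν (g fun i => |(0 : Fin n → ℝ) i|) ≤ 0
    have h1 : (fun i => |(0 : Fin n → ℝ) i|) = (0 : Fin n → ℝ) := by funext i; simp
    rw [h1, (hUgood g hg).map_zero]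
    exact le_of_eq ((hν3 0).2 rfl)
  have hsmul_le : ∀ (c : ℝ) (x), c ≠ 0 → nuStar A ν (c • x) ≤ |c| * nuStar A ν x := by
    intro c x hc
    refine csSup_le (hNE _) ?_
    rintro _ ⟨g, hg, rfl⟩
    show ν (g fun i => |(c • x) i|) ≤ |c| * nuStar A ν x
    have hceq : (fun i => |(c • x) i|) = |c| • (fun i => |x i|) := by
      funext i
      simp [abs_mul]
    have hcpos : 0 < |c| := abs_pos.2 hc
    rw [hceq, (hUgood g hg).2.1 |c| hcpos _ (habs x), hν2, abs_abs]
    exact mul_le_mul_of_nonneg_left (le_csSup (hBdd x) ⟨g, hg, rfl⟩) (abs_nonneg c)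
  refine ⟨?_, ?_, ?_, hpos, ?_, ?_⟩
  · -- subadditivity
    intro x y
    refine csSup_le (hNE _) ?_
    rintro _ ⟨g, hg, rfl⟩
    show ν (g fun i => |(x + y) i|) ≤ nuStar A ν x + nuStar A ν y
    have habs_le : (fun i => |(x + y) i|) ≤ (fun i => |x i|) + (fun i => |y i|) := by
      intro i
      simpa using abs_add_le (x i) (y i)
    have h1 : g (fun i => |(x + y) i|) ≤ g ((fun i => |x i|) + fun i => |y i|) :=
      (hUgood g hg).2.2.1 _ _ (habs _) habs_le
    have h2 : g ((fun i => |x i|) + fun i => |y i|) ≤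
        g (fun i => |x i|) + g (fun i => |y i|) :=
      (hUgood g hg).2.2.2 _ _ (habs x) (habs y)
    calc ν (g (fun i => |(x + y) i|)) ≤ ν (g (fun i => |x i|) + g (fun i => |y i|)) :=
        hν5 _ _ (fun i => ((hUgood g hg).1 _ (habs _)) i) (fun i => le_trans (h1 i) (h2 i))
    _ ≤ ν (g (fun i => |x i|)) + ν (g (fun i => |y i|)) := hν1 _ _
    _ ≤ nuStar A ν x + nuStar A ν y :=
        add_le_add (le_csSup (hBdd x) ⟨g, hg, rfl⟩) (le_csSup (hBdd y) ⟨g, hg, rfl⟩)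
  · -- homogeneity
    intro c x
    rcases eq_or_ne c 0 with rfl | hc
    · rw [zero_smul, hzero, abs_zero, zero_mul]
    · refine le_antisymm (hsmul_le c x hc) ?_
      have h1 := hsmul_le c⁻¹ (c • x) (inv_ne_zero hc)
      rw [smul_smul, inv_mul_cancel₀ hc, one_smul, abs_inv] at h1
      have hcpos : 0 < |c| := abs_pos.2 hc
      calc |c| * nuStar A ν x ≤ |c| * (|c|⁻¹ * nuStar A ν (c • x)) :=
          mul_le_mul_of_nonneg_left h1 (abs_nonneg c)
      _ = nuStar A ν (c • x) := by field_simp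
  · -- positive definiteness
    intro x
    constructor
    · intro h
      by_contra hx
      have habsne : (fun i => |x i|) ≠ 0 := by
        intro h0
        apply hx
        funext i
        have := congrFun h0 i
        simpa [abs_eq_zero] using this
      have hν_pos : 0 < ν (fun i => |x i|) :=
        lt_of_le_of_ne (hν4 _) (fun h0 => habsne ((hν3 _).1 h0.symm))
      have := hlow x
      rw [h] at this
      linarith
    · rintro rfl
      exact hzero
  · -- monotonicity
    intro x y hx hxy
    have hy : ∀ i, 0 ≤ y i := fun i => le_trans (hx i) (hxy i)
    have hax : (fun i => |x i|) = x := funext fun i => abs_of_nonneg (hx i)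
    have hay : (fun i => |y i|) = y := funext fun i => abs_of_nonneg (hy i)
    refine csSup_le (hNE x) ?_
    rintro _ ⟨g, hg, rfl⟩
    show ν (g fun i => |x i|) ≤ nuStar A ν y
    calc ν (g (fun i => |x i|)) = ν (g x) := by rw [hax]
    _ ≤ ν (g y) :=
        hν5 _ _ (fun i => ((hUgood g hg).1 x (fun i => hx i)) i)
          (fun i => ((hUgood g hg).2.2.1 x y (fun i => hx i) (fun i => hxy i)) i)
    _ = ν (g (fun i => |y i|)) := by rw [hay]
    _ ≤ nuStar A ν y := le_csSup (hBdd y) ⟨g, hg, rfl⟩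
  · -- extremality
    intro f hf x hx
    rw [hr, one_mul]
    have hx0 : (0 : Fin n → ℝ) ≤ x := fun i => hx i
    have hfx0 : (0 : Fin n → ℝ) ≤ f x := (hAg f hf).1 x hx0
    have hafx : (fun i => |(f x) i|) = f x := funext fun i => abs_of_nonneg (hfx0 i)
    have hax : (fun i => |x i|) = x := funext fun i => abs_of_nonneg (hx0 i)
    refine csSup_le (hNE _) ?_
    rintro _ ⟨g, hg, rfl⟩
    obtain ⟨m, hm⟩ := Set.mem_iUnion.1 hg
    have hgf : g ∘ f ∈ famPow A (m + 1) :=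
      famPow_comp m g hm 1 f ⟨f, hf, id, hid0, (Function.comp_id f).symm⟩
    show ν (g fun i => |f x i|) ≤ nuStar A ν x
    have e1 : g (fun i => |f x i|) = (g ∘ f) (fun i => |x i|) := by
      rw [hafx, hax]
      rfl
    rw [e1]
    exact le_csSup (hBdd x) ⟨g ∘ f, Set.mem_iUnion.2 ⟨m + 1, hgf⟩, rfl⟩
end
end

section
/- Let X be a real normed vector space, K ⊂ X a non-zero wedge, and 𝒜 a nonempty set of homogeneous, bounded maps on K. Then the generalized spectral subradius equals the joint spectral subradius: inf_{m∈ℕ} (inf_{f∈𝒜^m} r(f))^{1/m} = inf_{m∈ℕ} (inf_{f∈𝒜^m} ‖f‖)^{1/m}. -/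
open Filter Topology Set

noncomputable section

section Aux

variable {X : Type*} [NormedAddCommGroup X]

lemma opNormW_nonneg' (f : X → X) (W : Set X) : 0 ≤ opNormW f W :=
  Real.sSup_nonneg (by rintro y ⟨x, -, rfl⟩; exact norm_nonneg _)

lemma coneSpecRad_nonneg' (f : X → X) (W : Set X) : 0 ≤ coneSpecRad f W :=
  le_ciInf fun _ => Real.rpow_nonneg (opNormW_nonneg' _ _) _

lemma coneSpecRad_le_opNormW' (f : X → X) (W : Set X) :
    coneSpecRad f W ≤ opNormW f W := by
  have h := ciInf_le (f := fun n : ℕ+ => (opNormW (f^[(n : ℕ)]) W) ^ (((n : ℕ) : ℝ)⁻¹))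
    ⟨0, by rintro y ⟨n, rfl⟩; exact Real.rpow_nonneg (opNormW_nonneg' _ _) _⟩ 1
  simpa [coneSpecRad] using h

lemma famPow_nonempty' {Y : Type*} {A : Set (Y → Y)} (hA : A.Nonempty) (m : ℕ) :
    (famPow A m).Nonempty := by
  induction m with
  | zero => exact ⟨id, rfl⟩
  | succ m ih =>
      obtain ⟨f, hf⟩ := hA
      obtain ⟨g, hg⟩ := ih
      exact ⟨f ∘ g, f, hf, g, hg, rfl⟩

lemma famPow_comp' {Y : Type*} {A : Set (Y → Y)} :
    ∀ (p : ℕ) {q : ℕ} {f g : Y → Y}, f ∈ famPow A p → g ∈ famPow A q →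
      f ∘ g ∈ famPow A (p + q)
  | 0, q, f, g, hf, hg => by
      rw [famPow, Set.mem_singleton_iff] at hf
      subst hf
      simpa using hg
  | p + 1, q, f, g, hf, hg => by
      obtain ⟨a, ha, f', hf', rfl⟩ := hf
      have h := famPow_comp' p hf' hg
      have hpq : p + 1 + q = (p + q) + 1 := by omega
      rw [hpq]
      exact ⟨a, ha, f' ∘ g, h, rfl⟩

lemma iterate_mem_famPow' {Y : Type*} {A : Set (Y → Y)} {m : ℕ} {f : Y → Y}
    (hf : f ∈ famPow A m) : ∀ n : ℕ, f^[n] ∈ famPow A (m * n)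
  | 0 => rfl
  | n + 1 => by
      have h := famPow_comp' m hf (iterate_mem_famPow' hf n)
      have hmn : m * (n + 1) = m + m * n := by ring
      rw [Function.iterate_succ', hmn]
      exact h

lemma subBeta_nonneg' (A : Set (X → X)) (W : Set X) (m : ℕ) : 0 ≤ subBeta A W m :=
  Real.sInf_nonneg (by rintro y ⟨f, -, rfl⟩; exact opNormW_nonneg' _ _)

lemma subGamma_nonneg' (A : Set (X → X)) (W : Set X) (m : ℕ) : 0 ≤ subGamma A W m :=
  Real.sInf_nonneg (by rintro y ⟨f, -, rfl⟩; exact coneSpecRad_nonneg' _ _)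

end Aux

theorem statement16 {X : Type*} [NormedAddCommGroup X] [NormedSpace ℝ X]
    (W : Set X) (hW : IsWedge W) (hW0 : ∃ x ∈ W, x ≠ 0)
    (A : Set (X → X)) (hAne : A.Nonempty)
    (hA : ∀ f ∈ A, HomogOn f W ∧ BoundedMapOn f W) :
    (⨅ m : ℕ+, (subGamma A W (m : ℕ)) ^ (((m : ℕ) : ℝ)⁻¹)) =
      ⨅ m : ℕ+, (subBeta A W (m : ℕ)) ^ (((m : ℕ) : ℝ)⁻¹) := by
  have hWB : ∀ m : ℕ, (famPow A m).Nonempty := famPow_nonempty' hAne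
  have bddN : ∀ m : ℕ, BddBelow ((fun f => opNormW f W) '' famPow A m) := fun m =>
    ⟨0, by rintro y ⟨f, -, rfl⟩; exact opNormW_nonneg' _ _⟩
  have bddR : ∀ m : ℕ, BddBelow ((fun f => coneSpecRad f W) '' famPow A m) := fun m =>
    ⟨0, by rintro y ⟨f, -, rfl⟩; exact coneSpecRad_nonneg' _ _⟩
  have hGB : ∀ m : ℕ, subGamma A W m ≤ subBeta A W m := by
    intro m
    apply le_csInf ((hWB m).image _)
    rintro y ⟨f, hf, rfl⟩
    exact le_trans (csInf_le (bddR m) ⟨f, hf, rfl⟩) (coneSpecRad_le_opNormW' f W)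
  apply le_antisymm
  · exact ciInf_mono
      ⟨0, by rintro y ⟨m, rfl⟩; exact Real.rpow_nonneg (subGamma_nonneg' _ _ _) _⟩
      (fun m => Real.rpow_le_rpow (subGamma_nonneg' _ _ _) (hGB (m : ℕ)) (by positivity))
  · set R := ⨅ m : ℕ+, (subBeta A W (m : ℕ)) ^ (((m : ℕ) : ℝ)⁻¹) with hRdef
    have hR0 : 0 ≤ R :=
      le_ciInf fun n => Real.rpow_nonneg (subBeta_nonneg' _ _ _) _
    apply le_ciInf
    intro m
    have hm : (0 : ℝ) < ((m : ℕ) : ℝ) := by exact_mod_cast m.pos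
    have key : R ^ (((m : ℕ) : ℝ)) ≤ subGamma A W (m : ℕ) := by
      apply le_csInf ((hWB (m : ℕ)).image _)
      rintro y ⟨f, hf, rfl⟩
      apply le_ciInf
      intro n
      have hn : (0 : ℝ) < ((n : ℕ) : ℝ) := by exact_mod_cast n.pos
      have hc : (0 : ℝ) < ((m : ℕ) : ℝ) * ((n : ℕ) : ℝ) := mul_pos hm hn
      have hbdd : BddBelow (Set.range fun k : ℕ+ => (subBeta A W (k : ℕ)) ^ (((k : ℕ) : ℝ)⁻¹)) :=
        ⟨0, by rintro y ⟨k, rfl⟩; exact Real.rpow_nonneg (subBeta_nonneg' _ _ _) _⟩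
      have h1 : R ≤ (subBeta A W ((m : ℕ) * (n : ℕ))) ^ ((((m : ℕ) : ℝ) * ((n : ℕ) : ℝ))⁻¹) := by
        simpa [PNat.mul_coe, Nat.cast_mul] using ciInf_le hbdd (m * n)
      have h2 : R ^ (((m : ℕ) : ℝ) * ((n : ℕ) : ℝ)) ≤ subBeta A W ((m : ℕ) * (n : ℕ)) := by
        have h := Real.rpow_le_rpow hR0 h1 hc.le
        rwa [← Real.rpow_mul (subBeta_nonneg' _ _ _), inv_mul_cancel₀ hc.ne',
          Real.rpow_one] at h
      have h3 : R ^ (((m : ℕ) : ℝ) * ((n : ℕ) : ℝ)) ≤ opNormW (f^[(n : ℕ)]) W :=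
        h2.trans (csInf_le (bddN _) ⟨f^[(n : ℕ)], iterate_mem_famPow' hf (n : ℕ), rfl⟩)
      have h4 := Real.rpow_le_rpow (Real.rpow_nonneg hR0 _) h3 (inv_nonneg.mpr hn.le)
      rwa [← Real.rpow_mul hR0, mul_assoc, mul_inv_cancel₀ hn.ne', mul_one] at h4
    have hfin : R = (R ^ (((m : ℕ) : ℝ))) ^ (((m : ℕ) : ℝ)⁻¹) := by
      rw [← Real.rpow_mul hR0, mul_inv_cancel₀ hm.ne', Real.rpow_one]
    calc R = (R ^ (((m : ℕ) : ℝ))) ^ (((m : ℕ) : ℝ)⁻¹) := hfin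
      _ ≤ (subGamma A W (m : ℕ)) ^ (((m : ℕ) : ℝ)⁻¹) :=
          Real.rpow_le_rpow (Real.rpow_nonneg hR0 _) key (inv_nonneg.mpr hm.le)
end
end
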